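/- arXiv:2212.14424 — 2 statements merged into one kernel-verified Lean document; each statement's English description precedes it below -/
import Mathlib

section
/- If T* minimizes L_T(T) = KL(T_# p || q) + (1/(2h)) E_{x ~ p} ||x - T(x)||^2 over maps T: R^d -> R^d, then rho* = (T*)_# p minimizes L_rho(rho) = KL(rho || q) + (1/(2h)) W_2^2(p, rho) over probability densities rho with finite second moment. -/
open MeasureTheory
noncomputable section

/-- Squared Wasserstein-2 distance (Kantorovich formulation, over couplings). -/
noncomputable def W2sq {d : ℕ} (μ ν : Measure (EuclideanSpace ℝ (Fin d))) : ℝ :=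
  sInf {c : ℝ | ∃ pl : Measure (EuclideanSpace ℝ (Fin d) × EuclideanSpace ℝ (Fin d)),
    pl.map Prod.fst = μ ∧ pl.map Prod.snd = ν ∧ c = ∫ z, ‖z.1 - z.2‖ ^ 2 ∂pl}

/-- Kullback–Leibler divergence `∫ log (dμ/dν) dμ` between measures. -/
noncomputable def klDivM {d : ℕ} (μ ν : Measure (EuclideanSpace ℝ (Fin d))) : ℝ :=
  ∫ x, Real.log ((μ.rnDeriv ν x).toReal) ∂μ

lemma W2sq_le_cost {d : ℕ} (p : Measure (EuclideanSpace ℝ (Fin d)))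
    [IsProbabilityMeasure p]
    (T : EuclideanSpace ℝ (Fin d) → EuclideanSpace ℝ (Fin d)) (hT : Measurable T) :
    W2sq p (p.map T) ≤ ∫ x, ‖x - T x‖ ^ 2 ∂p := by
  apply csInf_le
  · refine ⟨0, fun c hc => ?_⟩
    obtain ⟨pl, -, -, rfl⟩ := hc
    exact integral_nonneg fun z => by positivity
  · have hm : Measurable fun x : EuclideanSpace ℝ (Fin d) => (x, T x) :=
      measurable_id.prodMk hT
    refine ⟨p.map (fun x => (x, T x)), ?_, ?_, ?_⟩
    · rw [Measure.map_map measurable_fst hm]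
      exact Measure.map_id
    · rw [Measure.map_map measurable_snd hm]
      rfl
    · rw [integral_map hm.aemeasurable (Continuous.aestronglyMeasurable (by fun_prop))]

/-- If `T*` minimizes the map-space JKO objective
`L_T(T) = KL(T_#p‖q) + E_p‖x - T(x)‖²/(2h)`, then `ρ* = (T*)_#p` minimizes the
density-space objective `L_ρ(ρ) = KL(ρ‖q) + W₂²(p,ρ)/(2h)` over probability
densities with finite second moment. -/
theorem jko_map_minimizer_gives_density_minimizer {d : ℕ} (h : ℝ) (hh : 0 < h)
    (p q : Measure (EuclideanSpace ℝ (Fin d)))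
    [IsProbabilityMeasure p] [IsProbabilityMeasure q]
    (hpac : p ≪ volume) (hqac : q ≪ volume)
    (hp2 : Integrable (fun x => ‖x‖ ^ 2) p) (hq2 : Integrable (fun x => ‖x‖ ^ 2) q)
    (hOT : ∀ ρ : Measure (EuclideanSpace ℝ (Fin d)), IsProbabilityMeasure ρ →
      ρ ≪ volume → Integrable (fun x => ‖x‖ ^ 2) ρ →
      ∃ T : EuclideanSpace ℝ (Fin d) → EuclideanSpace ℝ (Fin d),
        Measurable T ∧ p.map T = ρ ∧ (∫ x, ‖x - T x‖ ^ 2 ∂p) = W2sq p ρ)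
    (Tstar : EuclideanSpace ℝ (Fin d) → EuclideanSpace ℝ (Fin d))
    (hTmeas : Measurable Tstar)
    (hTmin : ∀ T : EuclideanSpace ℝ (Fin d) → EuclideanSpace ℝ (Fin d), Measurable T →
      klDivM (p.map Tstar) q + (1 / (2 * h)) * ∫ x, ‖x - Tstar x‖ ^ 2 ∂p ≤
      klDivM (p.map T) q + (1 / (2 * h)) * ∫ x, ‖x - T x‖ ^ 2 ∂p) :
    ∀ ρ : Measure (EuclideanSpace ℝ (Fin d)), IsProbabilityMeasure ρ →
      ρ ≪ volume → Integrable (fun x => ‖x‖ ^ 2) ρ →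
      klDivM (p.map Tstar) q + (1 / (2 * h)) * W2sq p (p.map Tstar) ≤
      klDivM ρ q + (1 / (2 * h)) * W2sq p ρ := by
  intro ρ hρp hρac hρ2
  obtain ⟨T, hT, hTmap, hTcost⟩ := hOT ρ hρp hρac hρ2
  have hc : (0:ℝ) < 1 / (2 * h) := by positivity
  calc klDivM (p.map Tstar) q + (1 / (2 * h)) * W2sq p (p.map Tstar)
      ≤ klDivM (p.map Tstar) q + (1 / (2 * h)) * ∫ x, ‖x - Tstar x‖ ^ 2 ∂p := by
        gcongr
        exact W2sq_le_cost p Tstar hTmeas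
    _ ≤ klDivM (p.map T) q + (1 / (2 * h)) * ∫ x, ‖x - T x‖ ^ 2 ∂p := hTmin T hT
    _ = klDivM ρ q + (1 / (2 * h)) * W2sq p ρ := by rw [hTmap, hTcost]
end
end

section
/- Let x(t) solve x'(t) = f(x(t), t) on [t0, t1] with C^1 vector field f, and rho a positive C^1 solution of the continuity equation ∂_t rho + div(rho f) = 0. Then log rho(x(t1), t1) = log rho(x(t0), t0) - ∫_{t0}^{t1} div f(x(s), s) ds. -/
noncomputable section

/-- Spatial divergence of a vector field on `ℝ^d`. -/
noncomputable def divg {d : ℕ} (f : EuclideanSpace ℝ (Fin d) → EuclideanSpace ℝ (Fin d))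
    (x : EuclideanSpace ℝ (Fin d)) : ℝ :=
  ∑ i, (fderiv ℝ f x (EuclideanSpace.single i (1 : ℝ))) i

private lemma clm_sum_single {d : ℕ} (L : EuclideanSpace ℝ (Fin d) →L[ℝ] ℝ)
    (v : EuclideanSpace ℝ (Fin d)) :
    ∑ i, L (EuclideanSpace.single i (1 : ℝ)) * v i = L v := by
  conv_rhs => rw [← (EuclideanSpace.basisFun (Fin d) ℝ).sum_repr v]
  rw [map_sum]
  simp [EuclideanSpace.basisFun_apply, EuclideanSpace.basisFun_repr, smul_eq_mul, mul_comm]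

/-- Integrated change of variables for neural ODE flows:
`log ρ(x(t₁), t₁) = log ρ(x(t₀), t₀) - ∫_{t₀}^{t₁} div f(x(s), s) ds`. -/
theorem integrated_change_of_variables {d : ℕ} (t0 t1 : ℝ) (ht : t0 ≤ t1)
    (f : EuclideanSpace ℝ (Fin d) → ℝ → EuclideanSpace ℝ (Fin d))
    (hf : ContDiff ℝ 1 fun z : EuclideanSpace ℝ (Fin d) × ℝ => f z.1 z.2)
    (rho : EuclideanSpace ℝ (Fin d) → ℝ → ℝ)
    (hrho : ContDiff ℝ 1 fun z : EuclideanSpace ℝ (Fin d) × ℝ => rho z.1 z.2)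
    (hpos : ∀ y t, 0 < rho y t)
    (hcontinuity : ∀ y t,
      deriv (fun τ => rho y τ) t + divg (fun z => rho z t • f z t) y = 0)
    (x : ℝ → EuclideanSpace ℝ (Fin d))
    (hx : ∀ u ∈ Set.Icc t0 t1, HasDerivAt x (f (x u) u) u) :
    Real.log (rho (x t1) t1) =
      Real.log (rho (x t0) t0) - ∫ s in t0..t1, divg (fun z => f z s) (x s) := by
  have hFdiff : Differentiable ℝ (fun z : EuclideanSpace ℝ (Fin d) × ℝ => f z.1 z.2) :=
    hf.differentiable one_ne_zero
  have hRdiff : Differentiable ℝ (fun z : EuclideanSpace ℝ (Fin d) × ℝ => rho z.1 z.2) :=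
    hrho.differentiable one_ne_zero
  -- partial derivatives in the space variable
  have hpartfx : ∀ (y : EuclideanSpace ℝ (Fin d)) (t : ℝ), HasFDerivAt (fun z => f z t)
      ((fderiv ℝ (fun z : EuclideanSpace ℝ (Fin d) × ℝ => f z.1 z.2) (y, t)).comp
        (ContinuousLinearMap.inl ℝ (EuclideanSpace ℝ (Fin d)) ℝ)) y := fun y t =>
    by
      have h := ((hFdiff (y, t)).hasFDerivAt).comp y (hasFDerivAt_prodMk_left (𝕜 := ℝ) y t)
      exact h
  have hpartrx : ∀ (y : EuclideanSpace ℝ (Fin d)) (t : ℝ), HasFDerivAt (fun z => rho z t)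
      ((fderiv ℝ (fun z : EuclideanSpace ℝ (Fin d) × ℝ => rho z.1 z.2) (y, t)).comp
        (ContinuousLinearMap.inl ℝ (EuclideanSpace ℝ (Fin d)) ℝ)) y := fun y t =>
    by
      have h := ((hRdiff (y, t)).hasFDerivAt).comp y (hasFDerivAt_prodMk_left (𝕜 := ℝ) y t)
      exact h
  -- partial derivative in time
  have hpartrt : ∀ (y : EuclideanSpace ℝ (Fin d)) (t : ℝ), HasDerivAt (fun τ => rho y τ)
      (fderiv ℝ (fun z : EuclideanSpace ℝ (Fin d) × ℝ => rho z.1 z.2) (y, t)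
        ((0 : EuclideanSpace ℝ (Fin d)), (1 : ℝ))) t := fun y t =>
    ((hRdiff (y, t)).hasFDerivAt).comp_hasDerivAt t
      ((hasDerivAt_const t y).prodMk (hasDerivAt_id t))
  -- product rule for the divergence
  have hdivprod : ∀ (y : EuclideanSpace ℝ (Fin d)) (t : ℝ), divg (fun z => rho z t • f z t) y
      = (fderiv ℝ (fun z : EuclideanSpace ℝ (Fin d) × ℝ => rho z.1 z.2) (y, t)).comp
          (ContinuousLinearMap.inl ℝ (EuclideanSpace ℝ (Fin d)) ℝ) (f y t)
        + rho y t * divg (fun z => f z t) y := by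
    intro y t
    have hprod : HasFDerivAt (fun z => rho z t • f z t) _ y := (hpartrx y t).smul (hpartfx y t)
    unfold divg
    rw [hprod.fderiv, (hpartfx y t).fderiv]
    have hco : ∀ i : Fin d,
        ((rho y t • (fderiv ℝ (fun z : EuclideanSpace ℝ (Fin d) × ℝ => f z.1 z.2) (y, t)).comp
            (ContinuousLinearMap.inl ℝ (EuclideanSpace ℝ (Fin d)) ℝ)
          + ((fderiv ℝ (fun z : EuclideanSpace ℝ (Fin d) × ℝ => rho z.1 z.2) (y, t)).comp
            (ContinuousLinearMap.inl ℝ (EuclideanSpace ℝ (Fin d)) ℝ)).smulRight (f y t))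
          (EuclideanSpace.single i (1 : ℝ))) i
        = rho y t * ((fderiv ℝ (fun z : EuclideanSpace ℝ (Fin d) × ℝ => f z.1 z.2) (y, t)).comp
            (ContinuousLinearMap.inl ℝ (EuclideanSpace ℝ (Fin d)) ℝ)
            (EuclideanSpace.single i (1 : ℝ))) i
          + ((fderiv ℝ (fun z : EuclideanSpace ℝ (Fin d) × ℝ => rho z.1 z.2) (y, t)).comp
            (ContinuousLinearMap.inl ℝ (EuclideanSpace ℝ (Fin d)) ℝ))
            (EuclideanSpace.single i (1 : ℝ)) * (f y t) i := fun i => rfl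
    simp only [hco]
    rw [Finset.sum_add_distrib, ← Finset.mul_sum, clm_sum_single]
    ring
  -- pointwise derivative of log rho along the flow
  have key : ∀ u ∈ Set.uIcc t0 t1, HasDerivAt (fun s => Real.log (rho (x s) s))
      (-(divg (fun z => f z u) (x u))) u := by
    intro u hu
    rw [Set.uIcc_of_le ht] at hu
    have hxu := hx u hu
    have hpath : HasDerivAt (fun s : ℝ => (x s, s)) ((f (x u) u, (1 : ℝ))) u :=
      hxu.prodMk (hasDerivAt_id u)
    have hcomp : HasDerivAt (fun s => rho (x s) s)
        (fderiv ℝ (fun z : EuclideanSpace ℝ (Fin d) × ℝ => rho z.1 z.2) (x u, u)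
          (f (x u) u, (1 : ℝ))) u := by
      have h0 : HasDerivAt ((fun z : EuclideanSpace ℝ (Fin d) × ℝ => rho z.1 z.2) ∘
          (fun s : ℝ => (x s, s)))
          (fderiv ℝ (fun z : EuclideanSpace ℝ (Fin d) × ℝ => rho z.1 z.2) (x u, u)
            (f (x u) u, (1 : ℝ))) u :=
        HasFDerivAt.comp_hasDerivAt u ((hRdiff (x u, u)).hasFDerivAt) hpath
      exact h0
    have hsplit : fderiv ℝ (fun z : EuclideanSpace ℝ (Fin d) × ℝ => rho z.1 z.2) (x u, u)
          (f (x u) u, (1 : ℝ))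
        = (fderiv ℝ (fun z : EuclideanSpace ℝ (Fin d) × ℝ => rho z.1 z.2) (x u, u)).comp
            (ContinuousLinearMap.inl ℝ (EuclideanSpace ℝ (Fin d)) ℝ) (f (x u) u)
          + fderiv ℝ (fun z : EuclideanSpace ℝ (Fin d) × ℝ => rho z.1 z.2) (x u, u)
            ((0 : EuclideanSpace ℝ (Fin d)), (1 : ℝ)) := by
      rw [ContinuousLinearMap.comp_apply, ContinuousLinearMap.inl_apply, ← map_add]
      congr 1
      simp
    have hc := hcontinuity (x u) u
    rw [(hpartrt (x u) u).deriv, hdivprod (x u) u] at hc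
    have hval : fderiv ℝ (fun z : EuclideanSpace ℝ (Fin d) × ℝ => rho z.1 z.2) (x u, u)
          (f (x u) u, (1 : ℝ))
        = -(rho (x u) u * divg (fun z => f z u) (x u)) := by
      rw [hsplit]; linarith
    rw [hval] at hcomp
    have hlog := hcomp.log (ne_of_gt (hpos (x u) u))
    have hq : -(rho (x u) u * divg (fun z => f z u) (x u)) / rho (x u) u
        = -(divg (fun z => f z u) (x u)) := by
      rw [neg_div, mul_div_cancel_left₀ _ (ne_of_gt (hpos (x u) u))]
    rwa [hq] at hlog
  -- integrability of the divergence along the path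
  have hxcont : ContinuousOn x (Set.Icc t0 t1) := fun u hu =>
    (hx u hu).continuousAt.continuousWithinAt
  have hDcont : Continuous (fderiv ℝ (fun z : EuclideanSpace ℝ (Fin d) × ℝ => f z.1 z.2)) :=
    hf.continuous_fderiv one_ne_zero
  have heq : ∀ s, divg (fun z => f z s) (x s)
      = ∑ i, EuclideanSpace.proj i
          ((fderiv ℝ (fun z : EuclideanSpace ℝ (Fin d) × ℝ => f z.1 z.2) (x s, s))
            ((EuclideanSpace.single i (1 : ℝ)), (0 : ℝ))) := by
    intro s
    unfold divg
    rw [(hpartfx (x s) s).fderiv]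
    simp [ContinuousLinearMap.comp_apply, ContinuousLinearMap.inl_apply]
  have hg'cont : ContinuousOn (fun s => divg (fun z => f z s) (x s)) (Set.Icc t0 t1) := by
    have h2 : ContinuousOn (fun s => ∑ i, EuclideanSpace.proj i
        ((fderiv ℝ (fun z : EuclideanSpace ℝ (Fin d) × ℝ => f z.1 z.2) (x s, s))
          ((EuclideanSpace.single i (1 : ℝ)), (0 : ℝ))))
        (Set.Icc t0 t1) := by
      apply continuousOn_finset_sum
      intro i _
      exact (EuclideanSpace.proj i).continuous.comp_continuousOn
        (((hDcont.comp_continuousOn (hxcont.prodMk continuousOn_id))).clm_apply continuousOn_const)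
    exact h2.congr fun s _ => heq s
  have hint : IntervalIntegrable (fun s => -(divg (fun z => f z s) (x s)))
      MeasureTheory.volume t0 t1 := by
    apply ContinuousOn.intervalIntegrable
    rw [Set.uIcc_of_le ht]
    exact hg'cont.neg
  have hFTC := intervalIntegral.integral_eq_sub_of_hasDerivAt key hint
  rw [intervalIntegral.integral_neg] at hFTC
  linarith
end
end
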